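/- If A and B are Heyting algebras that satisfy the same L_HA-sentences (i.e. are elementarily equivalent as L_HA-structures), then h_{l,d}(A) = h_{l,d}(B) for all l, d ∈ ℕ, as elements of ℕ ∪ {∞}. -/

import Mathlib

/-- Formal Heyting terms in `n` variables. -/
inductive HeytingTerm (n : ℕ) : Type
  | var : Fin n → HeytingTerm n
  | bot : HeytingTerm n
  | top : HeytingTerm n
  | inf : HeytingTerm n → HeytingTerm n → HeytingTerm n
  | sup : HeytingTerm n → HeytingTerm n → HeytingTerm n
  | himp : HeytingTerm n → HeytingTerm n → HeytingTerm n

namespace HeytingTerm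

/-- Evaluation of a Heyting term in a Heyting algebra. -/
def eval {n : ℕ} {H : Type*} [HeytingAlgebra H] (v : Fin n → H) : HeytingTerm n → H
  | var i => v i
  | bot => ⊥
  | top => ⊤
  | inf a b => a.eval v ⊓ b.eval v
  | sup a b => a.eval v ⊔ b.eval v
  | himp a b => a.eval v ⇨ b.eval v

/-- The degree of a Heyting term: the maximal number of nested occurrences of `⇨`. -/
def degree {n : ℕ} : HeytingTerm n → ℕ
  | var _ => 0
  | bot => 0
  | top => 0
  | inf a b => max a.degree b.degree
  | sup a b => max a.degree b.degree
  | himp a b => max a.degree b.degree + 1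

end HeytingTerm

/-- `b` is a solution of the system `(t, s₁, …, s_κ)` with parameters `a`. -/
def IsSolution {l m κ : ℕ} {H : Type*} [HeytingAlgebra H]
    (t : HeytingTerm (l + m)) (s : Fin κ → HeytingTerm (l + m))
    (a : Fin l → H) (b : Fin m → H) : Prop :=
  t.eval (Fin.append a b) = ⊤ ∧ ∀ k, (s k).eval (Fin.append a b) ≠ ⊤

/-- The system `(t, s₁, …, s_κ)` with parameters `a` has a solution in `H`. -/
def HasSolution {l m κ : ℕ} {H : Type*} [HeytingAlgebra H]
    (t : HeytingTerm (l + m)) (s : Fin κ → HeytingTerm (l + m)) (a : Fin l → H) : Prop :=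
  ∃ b : Fin m → H, IsSolution t s a b

/-- `a ≈ₙ a'`: the tuples satisfy the same equations `t = ⊤` for terms of degree `≤ n`. -/
def SimDeg {l : ℕ} {A : Type*} [HeytingAlgebra A] (n : ℕ) (a a' : Fin l → A) : Prop :=
  ∀ t : HeytingTerm l, t.degree ≤ n → (t.eval a = ⊤ ↔ t.eval a' = ⊤)

/-- `n` witnesses the `(l,d)`-index property for `A`: for all `a ≈ₙ a'` and every system
of degree `≤ d` in `l` parameters and one unknown, `S(a,q)` is solvable in `A` iff
`S(a',q)` is. -/
def IndexProp (A : Type*) [HeytingAlgebra A] (l d n : ℕ) : Prop :=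
  ∀ a a' : Fin l → A, SimDeg n a a' →
    ∀ (κ : ℕ) (t : HeytingTerm (l + 1)) (s : Fin κ → HeytingTerm (l + 1)),
      t.degree ≤ d → (∀ k, (s k).degree ≤ d) →
      (HasSolution t s a ↔ HasSolution t s a')

/-- The `(l,d)`-index `h_{l,d}(A) ∈ ℕ ∪ {∞}`: the least `n` satisfying `IndexProp A l d n`,
or `∞` if there is none. -/
noncomputable def hIndex (A : Type*) [HeytingAlgebra A] (l d : ℕ) : ℕ∞ :=
  sInf {x : ℕ∞ | ∃ n : ℕ, x = ↑n ∧ IndexProp A l d n}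

/-- The QE property: all the `(l,d)`-indices are finite. -/
def HasQEProp (A : Type*) [HeytingAlgebra A] : Prop :=
  ∀ l d : ℕ, hIndex A l d < ⊤

/-- The function symbols of the first-order language of Heyting algebras: two constants
(`⊥`, `⊤`) and three binary operations (`⊓`, `⊔`, `⇨`). -/
inductive LHAFunc : ℕ → Type
  | bot : LHAFunc 0
  | top : LHAFunc 0
  | inf : LHAFunc 2
  | sup : LHAFunc 2
  | himp : LHAFunc 2

/-- The first-order language of Heyting algebras. -/
def LHA : FirstOrder.Language := ⟨LHAFunc, fun _ => Empty⟩

/-- Every Heyting algebra is an `LHA`-structure, interpreting the symbols by the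
Heyting operations. -/
instance LHA.structure (H : Type*) [HeytingAlgebra H] : LHA.Structure H where
  funMap {_} f x :=
    match f with
    | .bot => ⊥
    | .top => ⊤
    | .inf => x 0 ⊓ x 1
    | .sup => x 0 ⊔ x 1
    | .himp => x 0 ⇨ x 1
  RelMap {_} r := Empty.elim r

/-! ### Auxiliary development -/

open FirstOrder FirstOrder.Language

universe u

namespace HeytingTerm

/-- Semantic equality of Heyting terms: equal evaluation in every Heyting algebra. -/
def SemEq {l : ℕ} (t u : HeytingTerm l) : Prop :=
  ∀ (H : Type u) [HeytingAlgebra H] (v : Fin l → H), t.eval v = u.eval v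

variable {l : ℕ}

/-- Formal supremum of a list of terms. -/
def listSup : List (HeytingTerm l) → HeytingTerm l
  | [] => .bot
  | t :: ts => .sup t (listSup ts)

/-- Formal infimum of a list of terms. -/
def listInf : List (HeytingTerm l) → HeytingTerm l
  | [] => .top
  | t :: ts => .inf t (listInf ts)

lemma eval_listSup {H : Type u} [HeytingAlgebra H] (v : Fin l → H) :
    ∀ L : List (HeytingTerm l),
      (listSup L).eval v = ((L.map (fun t => t.eval v) : List H) : Multiset H).sup
  | [] => by simp [listSup, eval]
  | t :: ts => by simp [listSup, eval, eval_listSup v ts]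

lemma eval_listInf {H : Type u} [HeytingAlgebra H] (v : Fin l → H) :
    ∀ L : List (HeytingTerm l),
      (listInf L).eval v = ((L.map (fun t => t.eval v) : List H) : Multiset H).inf
  | [] => by simp [listInf, eval]
  | t :: ts => by simp [listInf, eval, eval_listInf v ts]

lemma degree_listSup_le {n : ℕ} :
    ∀ {L : List (HeytingTerm l)}, (∀ t ∈ L, t.degree ≤ n) → (listSup L).degree ≤ n
  | [], _ => by simp [listSup, degree]
  | t :: ts, h => by
      simp only [listSup, degree, max_le_iff]
      exact ⟨h t (by simp), degree_listSup_le fun u hu => h u (by simp [hu])⟩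

lemma degree_listInf_le {n : ℕ} :
    ∀ {L : List (HeytingTerm l)}, (∀ t ∈ L, t.degree ≤ n) → (listInf L).degree ≤ n
  | [], _ => by simp [listInf, degree]
  | t :: ts, h => by
      simp only [listInf, degree, max_le_iff]
      exact ⟨h t (by simp), degree_listInf_le fun u hu => h u (by simp [hu])⟩

/-- Formal supremum over a finset. -/
noncomputable def fSup {β : Type} (S : Finset β) (f : β → HeytingTerm l) : HeytingTerm l :=
  listSup (S.toList.map f)

/-- Formal infimum over a finset. -/
noncomputable def fInf {β : Type} (S : Finset β) (f : β → HeytingTerm l) : HeytingTerm l :=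
  listInf (S.toList.map f)

lemma eval_fSup {H : Type u} [HeytingAlgebra H] (v : Fin l → H) {β : Type}
    (S : Finset β) (f : β → HeytingTerm l) :
    (fSup S f).eval v = S.sup fun b => (f b).eval v := by
  rw [fSup, eval_listSup, Finset.sup_def, ← Finset.coe_toList S, Multiset.map_coe,
    List.map_map]
  simp [Function.comp_def]

lemma eval_fInf {H : Type u} [HeytingAlgebra H] (v : Fin l → H) {β : Type}
    (S : Finset β) (f : β → HeytingTerm l) :
    (fInf S f).eval v = S.inf fun b => (f b).eval v := by
  rw [fInf, eval_listInf, Finset.inf_def, ← Finset.coe_toList S, Multiset.map_coe,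
    List.map_map]
  simp [Function.comp_def]

/-- The join-of-meets normal form term associated to a set of sets of indices into `G`. -/
noncomputable def ofNF (G : List (HeytingTerm l)) (𝒮 : Finset (Finset (Fin G.length))) :
    HeytingTerm l :=
  fSup 𝒮 fun S => fInf S fun i => G.get i

lemma eval_ofNF {H : Type u} [HeytingAlgebra H] (v : Fin l → H) (G : List (HeytingTerm l))
    (𝒮 : Finset (Finset (Fin G.length))) :
    (ofNF G 𝒮).eval v = 𝒮.sup fun S => S.inf fun i => (G.get i).eval v := by
  rw [ofNF, eval_fSup]
  exact Finset.sup_congr rfl fun S _ => eval_fInf v S _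

/-- `t` is semantically a join of meets of elements of `G`. -/
def Rep (G : List (HeytingTerm l)) (t : HeytingTerm l) : Prop :=
  ∃ 𝒮 : Finset (Finset (Fin G.length)), SemEq.{u} t (ofNF G 𝒮)

lemma Rep.bot' {G : List (HeytingTerm l)} : Rep.{u} G .bot :=
  ⟨∅, fun H _ v => by simp [eval_ofNF, eval]⟩

lemma Rep.top' {G : List (HeytingTerm l)} : Rep.{u} G .top :=
  ⟨{∅}, fun H _ v => by simp [eval_ofNF, eval]⟩

lemma Rep.of_mem {G : List (HeytingTerm l)} {t : HeytingTerm l} (h : t ∈ G) : Rep.{u} G t := by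
  obtain ⟨i, hi⟩ := List.get_of_mem h
  subst hi
  exact ⟨{{i}}, fun H _ v => by simp [eval_ofNF, List.get_eq_getElem]⟩

lemma Rep.sup' {G : List (HeytingTerm l)} {a b : HeytingTerm l} (ha : Rep.{u} G a)
    (hb : Rep.{u} G b) : Rep.{u} G (a.sup b) := by
  obtain ⟨𝒮, hS⟩ := ha
  obtain ⟨𝒯, hT⟩ := hb
  refine ⟨𝒮 ∪ 𝒯, fun H _ v => ?_⟩
  simp only [eval, hS H v, hT H v, eval_ofNF]
  exact (Finset.sup_union).symm

lemma Rep.inf' {G : List (HeytingTerm l)} {a b : HeytingTerm l} (ha : Rep.{u} G a)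
    (hb : Rep.{u} G b) : Rep.{u} G (a.inf b) := by
  obtain ⟨𝒮, hS⟩ := ha
  obtain ⟨𝒯, hT⟩ := hb
  refine ⟨(𝒮 ×ˢ 𝒯).image fun p => p.1 ∪ p.2, fun H _ v => ?_⟩
  simp only [eval, hS H v, hT H v, eval_ofNF]
  rw [Finset.sup_image, Finset.sup_inf_sup]
  exact Finset.sup_congr rfl fun p _ => by simp [Finset.inf_union, Function.comp]

lemma Rep.semEq {G : List (HeytingTerm l)} {t t' : HeytingTerm l} (h : SemEq.{u} t t')
    (ht : Rep.{u} G t') : Rep.{u} G t := by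
  obtain ⟨𝒮, hS⟩ := ht
  exact ⟨𝒮, fun H _ v => (h H v).trans (hS H v)⟩

/-- All join-of-meets normal forms over `G`: a finite list covering all lattice
combinations of elements of `G` up to semantic equality. -/
noncomputable def coverOf (G : List (HeytingTerm l)) : List (HeytingTerm l) :=
  (Finset.univ : Finset (Finset (Finset (Fin G.length)))).toList.map (ofNF G)

lemma Rep.mem_coverOf {G : List (HeytingTerm l)} {t : HeytingTerm l} (h : Rep.{u} G t) :
    ∃ u ∈ coverOf G, SemEq.{u} t u := by
  obtain ⟨𝒮, hS⟩ := h
  exact ⟨ofNF G 𝒮, List.mem_map.2 ⟨𝒮, by simp, rfl⟩, hS⟩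

/-- The generators at level `n`: variables, `⊥`, `⊤`, and (for `n ≥ 1`) implications
between representatives of level `n - 1`. -/
noncomputable def gens (l : ℕ) : ℕ → List (HeytingTerm l)
  | 0 => ((List.finRange l).map var) ++ [.bot, .top]
  | n + 1 => (((List.finRange l).map var) ++ [.bot, .top]) ++
      ((coverOf (gens l n)).flatMap fun a => (coverOf (gens l n)).map fun b => himp a b)

/-- A finite list of terms of degree `≤ n` covering all terms of degree `≤ n`
up to semantic equality. -/
noncomputable def cover (l n : ℕ) : List (HeytingTerm l) := coverOf (gens l n)

lemma degree_coverOf {G : List (HeytingTerm l)} {n : ℕ} (hG : ∀ t ∈ G, t.degree ≤ n) :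
    ∀ u ∈ coverOf G, u.degree ≤ n := by
  intro u hu
  rw [coverOf, List.mem_map] at hu
  obtain ⟨𝒮, -, rfl⟩ := hu
  refine degree_listSup_le fun x hx => ?_
  rw [List.mem_map] at hx
  obtain ⟨S, -, rfl⟩ := hx
  refine degree_listInf_le fun y hy => ?_
  rw [List.mem_map] at hy
  obtain ⟨i, -, rfl⟩ := hy
  exact hG _ (List.get_mem G i)

lemma degree_gens (l : ℕ) : ∀ n, ∀ t ∈ gens l n, t.degree ≤ n := by
  intro n
  induction n with
  | zero =>
    intro t ht
    rw [gens] at ht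
    rcases List.mem_append.1 ht with h | h
    · obtain ⟨i, -, rfl⟩ := List.mem_map.1 h
      simp [degree]
    · simp only [List.mem_cons, List.not_mem_nil, or_false] at h
      rcases h with rfl | rfl <;> simp [degree]
  | succ n ih =>
    intro t ht
    rw [gens] at ht
    rcases List.mem_append.1 ht with h | h
    · rcases List.mem_append.1 h with h | h
      · obtain ⟨i, -, rfl⟩ := List.mem_map.1 h
        simp [degree]
      · simp only [List.mem_cons, List.not_mem_nil, or_false] at h
        rcases h with rfl | rfl <;> simp [degree]
    · obtain ⟨a, ha, h⟩ := List.mem_flatMap.1 h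
      obtain ⟨b, hb, rfl⟩ := List.mem_map.1 h
      have hda := degree_coverOf ih a ha
      have hdb := degree_coverOf ih b hb
      simp only [degree]
      omega

lemma degree_cover (l n : ℕ) : ∀ u ∈ cover l n, u.degree ≤ n :=
  degree_coverOf (degree_gens l n)

lemma rep_gens (l : ℕ) : ∀ n, ∀ t : HeytingTerm l, t.degree ≤ n → Rep.{u} (gens l n) t := by
  intro n
  induction n with
  | zero =>
    intro t
    induction t with
    | var i =>
      intro _
      refine Rep.of_mem ?_
      rw [gens]
      exact List.mem_append_left _ (List.mem_map.2 ⟨i, List.mem_finRange i, rfl⟩)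
    | bot => intro _; exact Rep.bot'
    | top => intro _; exact Rep.top'
    | inf a b iha ihb =>
      intro hd
      simp only [degree, max_le_iff] at hd
      exact Rep.inf' (iha hd.1) (ihb hd.2)
    | sup a b iha ihb =>
      intro hd
      simp only [degree, max_le_iff] at hd
      exact Rep.sup' (iha hd.1) (ihb hd.2)
    | himp a b _ _ =>
      intro hd
      simp only [degree] at hd
      omega
  | succ n ih =>
    intro t
    induction t with
    | var i =>
      intro _
      refine Rep.of_mem ?_
      rw [gens]
      exact List.mem_append_left _ (List.mem_append_left _
        (List.mem_map.2 ⟨i, List.mem_finRange i, rfl⟩))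
    | bot => intro _; exact Rep.bot'
    | top => intro _; exact Rep.top'
    | inf a b iha ihb =>
      intro hd
      simp only [degree, max_le_iff] at hd
      exact Rep.inf' (iha hd.1) (ihb hd.2)
    | sup a b iha ihb =>
      intro hd
      simp only [degree, max_le_iff] at hd
      exact Rep.sup' (iha hd.1) (ihb hd.2)
    | himp a b _ _ =>
      intro hd
      simp only [degree] at hd
      have ha : a.degree ≤ n := by omega
      have hb : b.degree ≤ n := by omega
      obtain ⟨ua, hua, hsa⟩ := (ih a ha).mem_coverOf
      obtain ⟨ub, hub, hsb⟩ := (ih b hb).mem_coverOf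
      refine Rep.semEq (t' := himp ua ub) (fun H _ v => by simp [eval, hsa H v, hsb H v]) ?_
      refine Rep.of_mem ?_
      rw [gens]
      exact List.mem_append_right _ (List.mem_flatMap.2
        ⟨ua, hua, List.mem_map.2 ⟨ub, hub, rfl⟩⟩)

lemma cover_spec (l n : ℕ) (t : HeytingTerm l) (ht : t.degree ≤ n) :
    ∃ u ∈ cover l n, SemEq.{u} t u :=
  (rep_gens l n t ht).mem_coverOf

lemma simDeg_iff_cover {H : Type u} [HeytingAlgebra H] {n : ℕ} (a a' : Fin l → H) :
    SimDeg n a a' ↔ ∀ u ∈ cover l n, (u.eval a = ⊤ ↔ u.eval a' = ⊤) := by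
  constructor
  · intro h u hu
    exact h u (degree_cover l n u hu)
  · intro h t ht
    obtain ⟨u, hu, hsem⟩ := cover_spec.{u} l n t ht
    rw [hsem H a, hsem H a']
    exact h u hu

/-! ### First-order translation -/

@[simp] lemma funMap_bot {H : Type u} [HeytingAlgebra H] (x : Fin 0 → H) :
    Structure.funMap (L := LHA) (M := H) LHAFunc.bot x = ⊥ := rfl

@[simp] lemma funMap_top {H : Type u} [HeytingAlgebra H] (x : Fin 0 → H) :
    Structure.funMap (L := LHA) (M := H) LHAFunc.top x = ⊤ := rfl

@[simp] lemma funMap_inf {H : Type u} [HeytingAlgebra H] (x : Fin 2 → H) :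
    Structure.funMap (L := LHA) (M := H) LHAFunc.inf x = x 0 ⊓ x 1 := rfl

@[simp] lemma funMap_sup {H : Type u} [HeytingAlgebra H] (x : Fin 2 → H) :
    Structure.funMap (L := LHA) (M := H) LHAFunc.sup x = x 0 ⊔ x 1 := rfl

@[simp] lemma funMap_himp {H : Type u} [HeytingAlgebra H] (x : Fin 2 → H) :
    Structure.funMap (L := LHA) (M := H) LHAFunc.himp x = x 0 ⇨ x 1 := rfl

/-- Translation of Heyting terms into `LHA`-terms. -/
def toLTerm : ∀ {m : ℕ}, HeytingTerm m → LHA.Term (Fin m)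
  | _, .var i => Term.var i
  | _, .bot => Term.func LHAFunc.bot ![]
  | _, .top => Term.func LHAFunc.top ![]
  | _, .inf a b => Term.func LHAFunc.inf ![toLTerm a, toLTerm b]
  | _, .sup a b => Term.func LHAFunc.sup ![toLTerm a, toLTerm b]
  | _, .himp a b => Term.func LHAFunc.himp ![toLTerm a, toLTerm b]

@[simp] lemma realize_toLTerm {m : ℕ} {H : Type u} [HeytingAlgebra H] (x : Fin m → H) :
    ∀ t : HeytingTerm m, (toLTerm t).realize x = t.eval x
  | .var i => by simp [toLTerm, eval]
  | .bot => by rw [toLTerm]; exact (Term.realize_func _ _ _).trans (funMap_bot _)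
  | .top => by rw [toLTerm]; exact (Term.realize_func _ _ _).trans (funMap_top _)
  | .inf a b => by
      show _ = eval x a ⊓ eval x b; rw [← realize_toLTerm x a, ← realize_toLTerm x b]
      rw [toLTerm]; exact (Term.realize_func _ _ _).trans (funMap_inf _)
  | .sup a b => by
      show _ = eval x a ⊔ eval x b; rw [← realize_toLTerm x a, ← realize_toLTerm x b]
      rw [toLTerm]; exact (Term.realize_func _ _ _).trans (funMap_sup _)
  | .himp a b => by
      show _ = eval x a ⇨ eval x b; rw [← realize_toLTerm x a, ← realize_toLTerm x b]
      rw [toLTerm]; exact (Term.realize_func _ _ _).trans (funMap_himp _)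

/-- The formula expressing `t = ⊤`. -/
def eqTop {m : ℕ} (t : HeytingTerm m) : LHA.Formula (Fin m) :=
  Term.equal (toLTerm t) (toLTerm .top)

@[simp] lemma realize_eqTop {m : ℕ} {H : Type u} [HeytingAlgebra H] (t : HeytingTerm m)
    (x : Fin m → H) : (eqTop t).Realize x ↔ t.eval x = ⊤ := by
  simp [eqTop, eval]

@[simp] lemma realize_eqTop' {m : ℕ} {H : Type u} [HeytingAlgebra H] (t : HeytingTerm m)
    (x : Fin m → H) (d : Fin 0 → H) :
    BoundedFormula.Realize (eqTop t) x d ↔ t.eval x = ⊤ := by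
  have hd : d = default := funext fun j => j.elim0
  rw [hd]
  exact realize_eqTop t x

lemma formula_realize_iInf {α β : Type*} {M : Type u} [LHA.Structure M] [Finite β]
    (f : β → LHA.Formula α) (v : α → M) :
    Formula.Realize (L := LHA) (M := M) (BoundedFormula.iInf f) v ↔
      ∀ b, (f b).Realize v :=
  BoundedFormula.realize_iInf

/-- The formula expressing that the system `(t, s)` has a solution. -/
noncomputable def solF {κ : ℕ} (t : HeytingTerm (l + 1)) (s : Fin κ → HeytingTerm (l + 1)) :
    LHA.Formula (Fin l) :=
  Formula.iExs (Fin 1) (Formula.relabel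
    (fun j : Fin (l + 1) => (Fin.addCases Sum.inl Sum.inr j : Fin l ⊕ Fin 1))
    (eqTop t ⊓ BoundedFormula.iInf fun k => ∼(eqTop (s k))))

lemma sum_elim_addCases {H : Type u} (v : Fin l → H) (i : Fin 1 → H) :
    (fun a : Fin (l + 1) => Sum.elim v i (Fin.addCases Sum.inl Sum.inr a)) = Fin.append v i := by
  funext a
  refine Fin.addCases (fun a0 => ?_) (fun a1 => ?_) a <;>
    simp [Fin.append, Fin.addCases_left, Fin.addCases_right]

lemma realize_solF {κ : ℕ} {H : Type u} [HeytingAlgebra H] (t : HeytingTerm (l + 1))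
    (s : Fin κ → HeytingTerm (l + 1)) (v : Fin l → H) :
    (solF t s).Realize v ↔ HasSolution t s v := by
  rw [solF, Formula.realize_iExs]
  refine exists_congr fun i => ?_
  rw [Formula.realize_relabel, Function.comp_def, sum_elim_addCases]
  rw [show (Formula.Realize (L := LHA) (M := H)
      (eqTop t ⊓ BoundedFormula.iInf fun k => ∼(eqTop (s k))) (Fin.append v i)) ↔ _
    from Formula.realize_inf]
  rw [formula_realize_iInf]
  simp only [Formula.realize_not, realize_eqTop, Finset.mem_univ, forall_true_left, true_implies]
  rfl

/-- The formula (in `2l` free variables) expressing `a ≈ₙ a'`. -/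
noncomputable def simF (l n : ℕ) : LHA.Formula (Fin l ⊕ Fin l) :=
  BoundedFormula.iInf fun i : Fin (cover l n).length =>
    (Formula.relabel Sum.inl (eqTop ((cover l n).get i))).iff
      (Formula.relabel Sum.inr (eqTop ((cover l n).get i)))

lemma realize_simF {H : Type u} [HeytingAlgebra H] {n : ℕ} (a a' : Fin l → H) :
    (simF l n).Realize (Sum.elim a a') ↔ SimDeg n a a' := by
  rw [simDeg_iff_cover, simF, formula_realize_iInf]
  constructor
  · intro h u hu
    obtain ⟨i, hi⟩ := List.get_of_mem hu
    have h2 := h i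
    rw [Formula.realize_iff, Formula.realize_relabel, Formula.realize_relabel] at h2
    rw [← hi]
    simpa [Sum.elim_comp_inl, Sum.elim_comp_inr] using h2
  · intro h i
    rw [Formula.realize_iff, Formula.realize_relabel, Formula.realize_relabel]
    have h2 := h _ (List.get_mem (cover l n) i)
    simpa [Sum.elim_comp_inl, Sum.elim_comp_inr] using h2

/-- The sentence expressing the `(l,d)`-index property for a single system. -/
noncomputable def idxSentence (l n κ : ℕ) (t : HeytingTerm (l + 1))
    (s : Fin κ → HeytingTerm (l + 1)) : LHA.Sentence :=
  Formula.iAlls (Fin l ⊕ Fin l) (Formula.relabel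
    (Sum.inr : Fin l ⊕ Fin l → Empty ⊕ (Fin l ⊕ Fin l))
    ((simF l n).imp ((Formula.relabel Sum.inl (solF t s)).iff
      (Formula.relabel Sum.inr (solF t s)))))

lemma realize_idxSentence {H : Type u} [HeytingAlgebra H] {n κ : ℕ} (t : HeytingTerm (l + 1))
    (s : Fin κ → HeytingTerm (l + 1)) :
    H ⊨ idxSentence l n κ t s ↔
      ∀ a a' : Fin l → H, SimDeg n a a' → (HasSolution t s a ↔ HasSolution t s a') := by
  have key : ∀ i : Fin l ⊕ Fin l → H,
      (Formula.Realize (L := LHA) (M := H)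
        ((simF l n).imp ((Formula.relabel Sum.inl (solF t s)).iff
          (Formula.relabel Sum.inr (solF t s)))) i) ↔
      (SimDeg n (i ∘ Sum.inl) (i ∘ Sum.inr) →
        (HasSolution t s (i ∘ Sum.inl) ↔ HasSolution t s (i ∘ Sum.inr))) := by
    intro i
    rw [Formula.realize_imp, Formula.realize_iff, Formula.realize_relabel,
      Formula.realize_relabel, realize_solF, realize_solF]
    have : Sum.elim (i ∘ Sum.inl) (i ∘ Sum.inr) = i := Sum.elim_comp_inl_inr i
    rw [← this, realize_simF]
    simp [Sum.elim_comp_inl, Sum.elim_comp_inr]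
  rw [idxSentence, Sentence.Realize, Formula.realize_iAlls]
  simp only [Formula.realize_relabel, Function.comp_def, Sum.elim_inr]
  constructor
  · intro hh a a' hsim
    have h2 := (key (Sum.elim a a')).1 (hh (Sum.elim a a'))
    have hsim' : SimDeg n (Sum.elim a a' ∘ Sum.inl) (Sum.elim a a' ∘ Sum.inr) := by
      simpa [Sum.elim_comp_inl, Sum.elim_comp_inr] using hsim
    simpa [Sum.elim_comp_inl, Sum.elim_comp_inr] using h2 hsim'
  · intro hh i
    exact (key i).2 fun hsim => hh _ _ hsim

lemma indexProp_iff_models (H : Type u) [HeytingAlgebra H] (l d n : ℕ) :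
    IndexProp H l d n ↔ ∀ (κ : ℕ) (t : HeytingTerm (l + 1)) (s : Fin κ → HeytingTerm (l + 1)),
      t.degree ≤ d → (∀ k, (s k).degree ≤ d) → H ⊨ idxSentence l n κ t s := by
  constructor
  · intro h κ t s ht hs
    rw [realize_idxSentence]
    intro a a' hsim
    exact h a a' hsim κ t s ht hs
  · intro h a a' hsim κ t s ht hs
    exact (realize_idxSentence t s).mp (h κ t s ht hs) a a' hsim

end HeytingTerm

open FirstOrder in
/-- Elementarily equivalent Heyting algebras have the same `(l,d)`-indices. -/
theorem hIndex_eq_of_elementarilyEquivalent (A : Type*) (B : Type*)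
    [HeytingAlgebra A] [HeytingAlgebra B] (h : A ≅[LHA] B) (l d : ℕ) :
    hIndex A l d = hIndex B l d := by
  have key : ∀ n : ℕ, IndexProp A l d n ↔ IndexProp B l d n := by
    intro n
    rw [HeytingTerm.indexProp_iff_models, HeytingTerm.indexProp_iff_models]
    exact forall_congr' fun κ => forall_congr' fun t => forall_congr' fun s =>
      imp_congr_right fun _ => imp_congr_right fun _ => h.realize_sentence _
  unfold hIndex
  congr 1
  ext x
  simp only [Set.mem_setOf_eq]
  exact exists_congr fun n => and_congr_right fun _ => key n
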